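/- For every v ∈ H with 𝐈v = v one has T(2T*v − 𝐉v) = v and 2T*(Tv) − 𝐉(Tv) = v (so the restriction T⁺ of T to H⁺ is invertible with inverse the restriction of 2T* − 𝐉), and moreover 2Tv + 2T*v − 𝐉v = −3𝐉(Bv) = −3B(𝐉v). -/

import Mathlib

noncomputable section

abbrev SL2Z := Matrix.SpecialLinearGroup (Fin 2) ℤ

def Lmat : SL2Z := ⟨!![1, 1; 0, 1], by decide⟩
def Rmat : SL2Z := ⟨!![1, 0; 1, 1], by decide⟩
def Jmat : SL2Z := ⟨!![0, 1; -1, 0], by decide⟩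
def Imat : SL2Z := ⟨!![-1, 0; 0, -1], by decide⟩

variable {H : Type*} [NormedAddCommGroup H] [InnerProductSpace ℂ H] [CompleteSpace H]

/-- The bounded operator associated to a group element by the unitary representation. -/
def rop (ρ : SL2Z →* unitary (H →L[ℂ] H)) (g : SL2Z) : H →L[ℂ] H := (ρ g : H →L[ℂ] H)

/-- The Markov operator T = (𝐋 + 𝐑)/2. -/
def opT (ρ : SL2Z →* unitary (H →L[ℂ] H)) : H →L[ℂ] H := (2 : ℂ)⁻¹ • (rop ρ Lmat + rop ρ Rmat)

/-- Y₊ = (1/3)((3/2)·id − (1/2)𝐈 + 𝐑⁻¹𝐋 + 𝐋⁻¹𝐑). -/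
def opYp (ρ : SL2Z →* unitary (H →L[ℂ] H)) : H →L[ℂ] H :=
  (3 : ℂ)⁻¹ • ((3 / 2 : ℂ) • (1 : H →L[ℂ] H) - (2 : ℂ)⁻¹ • rop ρ Imat
    + rop ρ Rmat⁻¹ * rop ρ Lmat + rop ρ Lmat⁻¹ * rop ρ Rmat)

/-- Y₋ = 𝐉* Y₊ 𝐉. -/
def opYm (ρ : SL2Z →* unitary (H →L[ℂ] H)) : H →L[ℂ] H :=
  ContinuousLinearMap.adjoint (rop ρ Jmat) * opYp ρ * rop ρ Jmat

/-- B = id − Y₊ − Y₋. -/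
def opB (ρ : SL2Z →* unitary (H →L[ℂ] H)) : H →L[ℂ] H := 1 - opYp ρ - opYm ρ


lemma rop_rop (ρ : SL2Z →* unitary (H →L[ℂ] H)) (g h : SL2Z) (v : H) :
    rop ρ g (rop ρ h v) = rop ρ (g * h) v := by
  simp [rop, map_mul, ContinuousLinearMap.mul_apply]

lemma rop_one (ρ : SL2Z →* unitary (H →L[ℂ] H)) (v : H) : rop ρ 1 v = v := by
  rw [rop, map_one, OneMemClass.coe_one, ContinuousLinearMap.one_apply]

lemma rop_inv (ρ : SL2Z →* unitary (H →L[ℂ] H)) (g : SL2Z) :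
    ContinuousLinearMap.adjoint (rop ρ g) = rop ρ g⁻¹ := by
  rw [← ContinuousLinearMap.star_eq_adjoint, rop, rop, map_inv, ← Unitary.star_eq_inv, Unitary.coe_star]

/-- For every v ∈ H with 𝐈v = v one has T(2T*v − 𝐉v) = v and 2T*(Tv) − 𝐉(Tv) = v
(so T⁺ is invertible with inverse the restriction of 2T* − 𝐉), and moreover
2Tv + 2T*v − 𝐉v = −3𝐉(Bv) = −3B(𝐉v). -/
theorem Tplus_invertible_and_TJB_formula (ρ : SL2Z →* unitary (H →L[ℂ] H))
    (v : H) (hv : rop ρ Imat v = v) :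
    opT ρ ((2 : ℂ) • ContinuousLinearMap.adjoint (opT ρ) v - rop ρ Jmat v) = v ∧
    (2 : ℂ) • ContinuousLinearMap.adjoint (opT ρ) (opT ρ v) - rop ρ Jmat (opT ρ v) = v ∧
    (2 : ℂ) • opT ρ v + (2 : ℂ) • ContinuousLinearMap.adjoint (opT ρ) v - rop ρ Jmat v
      = (-3 : ℂ) • rop ρ Jmat (opB ρ v) ∧
    (-3 : ℂ) • rop ρ Jmat (opB ρ v) = (-3 : ℂ) • opB ρ (rop ρ Jmat v) := by

  have hTadj : ContinuousLinearMap.adjoint (opT ρ) = (2:ℂ)⁻¹ • (rop ρ Lmat⁻¹ + rop ρ Rmat⁻¹) := by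
    rw [opT, map_smulₛₗ, map_add, rop_inv, rop_inv]
    norm_num [Complex.conj_ofNat]
  have hI : ∀ g : SL2Z, rop ρ (g * Imat) v = rop ρ g v := fun g => by rw [← rop_rop, hv]
  have h1 : opT ρ ((2 : ℂ) • ContinuousLinearMap.adjoint (opT ρ) v - rop ρ Jmat v) = v := by
    rw [hTadj]
    simp only [opT, ContinuousLinearMap.add_apply, ContinuousLinearMap.smul_apply,
      ContinuousLinearMap.sub_apply, map_add, map_sub, map_smul, smul_smul, rop_rop]
    rw [show Lmat * Jmat = Rmat * Lmat⁻¹ * Imat from Subtype.ext (by decide), hI,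
      show Lmat * Rmat⁻¹ = Rmat * Jmat from Subtype.ext (by decide),
      show Lmat * Lmat⁻¹ = 1 from mul_inv_cancel _,
      show Rmat * Rmat⁻¹ = 1 from mul_inv_cancel _, rop_one]
    module
  have h2 : (2 : ℂ) • ContinuousLinearMap.adjoint (opT ρ) (opT ρ v) - rop ρ Jmat (opT ρ v) = v := by
    rw [hTadj]
    simp only [opT, ContinuousLinearMap.add_apply, ContinuousLinearMap.smul_apply,
      ContinuousLinearMap.sub_apply, map_add, map_sub, map_smul, smul_smul, rop_rop]
    rw [show Jmat * Lmat = Lmat⁻¹ * Rmat * Imat from Subtype.ext (by decide), hI,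
      show Jmat * Rmat = Rmat⁻¹ * Lmat from Subtype.ext (by decide),
      show Lmat⁻¹ * Lmat = 1 from inv_mul_cancel _,
      show Rmat⁻¹ * Rmat = 1 from inv_mul_cancel _, rop_one]
    module
  have h3 : (2 : ℂ) • opT ρ v + (2 : ℂ) • ContinuousLinearMap.adjoint (opT ρ) v - rop ρ Jmat v
      = (-3 : ℂ) • rop ρ Jmat (opB ρ v) := by
    rw [hTadj]
    simp only [opT, opB, opYp, opYm, rop_inv, ContinuousLinearMap.add_apply,
      ContinuousLinearMap.smul_apply, ContinuousLinearMap.sub_apply,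
      ContinuousLinearMap.mul_apply, ContinuousLinearMap.one_apply,
      map_add, map_sub, map_smul, smul_smul, rop_rop, hv]
    rw [show Jmat * (Jmat⁻¹ * (Imat * Jmat)) = Jmat * Imat from Subtype.ext (by decide),
      show Jmat * (Jmat⁻¹ * (Rmat⁻¹ * (Lmat * Jmat))) = Lmat⁻¹ * Imat from Subtype.ext (by decide),
      show Jmat * (Jmat⁻¹ * (Lmat⁻¹ * (Rmat * Jmat))) = Rmat⁻¹ from Subtype.ext (by decide),
      show Jmat * (Jmat⁻¹ * Jmat) = Jmat from Subtype.ext (by decide),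
      show Jmat * (Rmat⁻¹ * Lmat) = Rmat * Imat from Subtype.ext (by decide),
      show Jmat * (Lmat⁻¹ * Rmat) = Lmat from Subtype.ext (by decide)]
    simp only [hI]
    module
  have h4 : (-3 : ℂ) • rop ρ Jmat (opB ρ v) = (-3 : ℂ) • opB ρ (rop ρ Jmat v) := by
    simp only [opB, opYp, opYm, rop_inv, ContinuousLinearMap.add_apply,
      ContinuousLinearMap.smul_apply, ContinuousLinearMap.sub_apply,
      ContinuousLinearMap.mul_apply, ContinuousLinearMap.one_apply,
      map_add, map_sub, map_smul, smul_smul, rop_rop, hv]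
    rw [show Jmat * (Jmat⁻¹ * (Imat * Jmat)) = Jmat * Imat from Subtype.ext (by decide),
      show Jmat * (Jmat⁻¹ * (Rmat⁻¹ * (Lmat * Jmat))) = Lmat⁻¹ * Imat from Subtype.ext (by decide),
      show Jmat * (Jmat⁻¹ * (Lmat⁻¹ * (Rmat * Jmat))) = Rmat⁻¹ from Subtype.ext (by decide),
      show Jmat * (Jmat⁻¹ * Jmat) = Jmat from Subtype.ext (by decide),
      show Jmat * (Rmat⁻¹ * Lmat) = Rmat * Imat from Subtype.ext (by decide),
      show Jmat * (Lmat⁻¹ * Rmat) = Lmat from Subtype.ext (by decide),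
      show Jmat⁻¹ * (Imat * (Jmat * Jmat)) = Jmat * Imat from Subtype.ext (by decide),
      show Jmat⁻¹ * (Rmat⁻¹ * (Lmat * (Jmat * Jmat))) = Rmat * Imat from Subtype.ext (by decide),
      show Jmat⁻¹ * (Lmat⁻¹ * (Rmat * (Jmat * Jmat))) = Lmat from Subtype.ext (by decide),
      show Jmat⁻¹ * (Jmat * Jmat) = Jmat from Subtype.ext (by decide),
      show Rmat⁻¹ * (Lmat * Jmat) = Lmat⁻¹ * Imat from Subtype.ext (by decide),
      show Lmat⁻¹ * (Rmat * Jmat) = Rmat⁻¹ from Subtype.ext (by decide),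
      show Imat * Jmat = Jmat * Imat from Subtype.ext (by decide)]
    simp only [hI]
    module
  exact ⟨h1, h2, h3, h4⟩
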